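/- Let 0 < λ < 1/7 and let F ⊆ ℝ be the attractor of the IFS f₁(x)=λx, f₂(x)=λx+2λ, f₃(x)=λx+3λ−λ², f₄(x)=λx+4λ−2λ², f₅(x)=λx+5λ, f₆(x)=λx+1−λ. Then f₂ ∘ f₆ = f₃ ∘ f₁ and f₄ ∘ f₁ = f₃ ∘ f₆ as maps on ℝ, and the sets f₁(F), f₅(F), f₆(F), f₂(F)∖(f₂∘f₆)(F), f₄(F)∖(f₄∘f₁)(F), f₃(F) are pairwise disjoint with union F. -/

import Mathlib

set_option maxHeartbeats 1000000 in
theorem line_example_structure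
    (l : ℝ) (hl : 0 < l ∧ l < 1 / 7)
    (f : Fin 6 → ℝ → ℝ)
    (hf : f = ![fun x => l * x,
                fun x => l * x + 2 * l,
                fun x => l * x + 3 * l - l ^ 2,
                fun x => l * x + 4 * l - 2 * l ^ 2,
                fun x => l * x + 5 * l,
                fun x => l * x + 1 - l])
    (F : Set ℝ) (hFne : F.Nonempty) (hFc : IsCompact F)
    (hFeq : F = ⋃ i : Fin 6, f i '' F)
    (S : Fin 6 → Set ℝ)
    (hS : S = ![f 0 '' F, f 4 '' F, f 5 '' F,
                f 1 '' F \ (f 1 ∘ f 5) '' F,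
                f 3 '' F \ (f 3 ∘ f 0) '' F,
                f 2 '' F]) :
    f 1 ∘ f 5 = f 2 ∘ f 0 ∧ f 3 ∘ f 0 = f 2 ∘ f 5 ∧
    (Set.univ : Set (Fin 6)).PairwiseDisjoint S ∧ ⋃ i, S i = F := by
  obtain ⟨hl0, hl7⟩ := hl
  have e0 : f 0 = fun x => l * x := by rw [hf]; rfl
  have e1 : f 1 = fun x => l * x + 2 * l := by rw [hf]; rfl
  have e2 : f 2 = fun x => l * x + 3 * l - l ^ 2 := by rw [hf]; rfl
  have e3 : f 3 = fun x => l * x + 4 * l - 2 * l ^ 2 := by rw [hf]; rfl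
  have e4 : f 4 = fun x => l * x + 5 * l := by rw [hf]; rfl
  have e5 : f 5 = fun x => l * x + 1 - l := by rw [hf]; rfl
  have hS0 : S 0 = f 0 '' F := by rw [hS]; rfl
  have hS1 : S 1 = f 4 '' F := by rw [hS]; rfl
  have hS2 : S 2 = f 5 '' F := by rw [hS]; rfl
  have hS3 : S 3 = f 1 '' F \ (f 1 ∘ f 5) '' F := by rw [hS]; rfl
  have hS4 : S 4 = f 3 '' F \ (f 3 ∘ f 0) '' F := by rw [hS]; rfl
  have hS5 : S 5 = f 2 '' F := by rw [hS]; rfl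
  have hbA : BddAbove F := hFc.bddAbove
  have hbB : BddBelow F := hFc.bddBelow
  -- F ⊆ [0,1]
  have hsup : sSup F ≤ 1 := by
    have h1 : sSup F ≤ l * sSup F + (1 - l) := by
      apply csSup_le hFne
      intro x hx
      rw [hFeq] at hx
      simp only [Set.mem_iUnion, Set.mem_image] at hx
      obtain ⟨i, y, hy, hxy⟩ := hx
      have hyle : y ≤ sSup F := le_csSup hbA hy
      fin_cases i <;> simp only [hf] at hxy <;>
        norm_num [Matrix.cons_val_zero, Matrix.cons_val_one, Matrix.head_cons] at hxy <;> nlinarith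
    nlinarith
  have hinf : 0 ≤ sInf F := by
    have h1 : l * sInf F ≤ sInf F := by
      apply le_csInf hFne
      intro x hx
      rw [hFeq] at hx
      simp only [Set.mem_iUnion, Set.mem_image] at hx
      obtain ⟨i, y, hy, hxy⟩ := hx
      have hyle : sInf F ≤ y := csInf_le hbB hy
      fin_cases i <;> simp only [hf] at hxy <;>
        norm_num [Matrix.cons_val_zero, Matrix.cons_val_one, Matrix.head_cons] at hxy <;> nlinarith
    nlinarith
  have hFmem : ∀ x ∈ F, 0 ≤ x ∧ x ≤ 1 := fun x hx =>
    ⟨le_trans hinf (csInf_le hbB hx), le_trans (le_csSup hbA hx) hsup⟩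
  -- identities
  have hid1 : f 1 ∘ f 5 = f 2 ∘ f 0 := by
    funext x; simp only [e1, e2, e0, e5, Function.comp]; ring
  have hid2 : f 3 ∘ f 0 = f 2 ∘ f 5 := by
    funext x; simp only [e3, e2, e0, e5, Function.comp]; ring
  -- interval bounds on images
  have b0 : ∀ x ∈ f 0 '' F, 0 ≤ x ∧ x ≤ l := by
    rintro x ⟨a, ha, rfl⟩
    obtain ⟨h1, h2⟩ := hFmem a ha
    simp only [e0]; constructor <;> nlinarith
  have b1 : ∀ x ∈ f 1 '' F, 2 * l ≤ x ∧ x ≤ 3 * l := by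
    rintro x ⟨a, ha, rfl⟩
    obtain ⟨h1, h2⟩ := hFmem a ha
    simp only [e1]; constructor <;> nlinarith
  have b2 : ∀ x ∈ f 2 '' F, 3 * l - l ^ 2 ≤ x ∧ x ≤ 4 * l - l ^ 2 := by
    rintro x ⟨a, ha, rfl⟩
    obtain ⟨h1, h2⟩ := hFmem a ha
    simp only [e2]; constructor <;> nlinarith
  have b3 : ∀ x ∈ f 3 '' F, 4 * l - 2 * l ^ 2 ≤ x ∧ x ≤ 5 * l - 2 * l ^ 2 := by
    rintro x ⟨a, ha, rfl⟩
    obtain ⟨h1, h2⟩ := hFmem a ha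
    simp only [e3]; constructor <;> nlinarith
  have b4 : ∀ x ∈ f 4 '' F, 5 * l ≤ x ∧ x ≤ 6 * l := by
    rintro x ⟨a, ha, rfl⟩
    obtain ⟨h1, h2⟩ := hFmem a ha
    simp only [e4]; constructor <;> nlinarith
  have b5 : ∀ x ∈ f 5 '' F, 1 - l ≤ x ∧ x ≤ 1 := by
    rintro x ⟨a, ha, rfl⟩
    obtain ⟨h1, h2⟩ := hFmem a ha
    simp only [e5]; constructor <;> nlinarith
  -- pigeonhole lemmas
  have hlow : ∀ y ∈ F, y ≤ l → y ∈ f 0 '' F := by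
    intro y hy hyl
    rw [hFeq] at hy
    simp only [Set.mem_iUnion, Set.mem_image] at hy
    obtain ⟨i, z, hz, hzy⟩ := hy
    obtain ⟨hz0, hz1⟩ := hFmem z hz
    fin_cases i <;> simp only [hf] at hzy <;>
        norm_num [Matrix.cons_val_zero, Matrix.cons_val_one, Matrix.head_cons] at hzy
    · exact ⟨z, hz, by simp only [e0]; linarith⟩
    all_goals nlinarith
  have hhigh : ∀ y ∈ F, 1 - l ≤ y → y ∈ f 5 '' F := by
    intro y hy hyl
    rw [hFeq] at hy
    simp only [Set.mem_iUnion, Set.mem_image] at hy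
    obtain ⟨i, z, hz, hzy⟩ := hy
    obtain ⟨hz0, hz1⟩ := hFmem z hz
    fin_cases i <;> simp only [hf] at hzy <;>
        norm_num [Matrix.cons_val_zero, Matrix.cons_val_one, Matrix.head_cons] at hzy
    · nlinarith
    · nlinarith
    · nlinarith
    · nlinarith
    · nlinarith
    · exact ⟨z, hz, by simp only [e5]; linarith⟩
  -- the two hard disjointness facts
  have d35 : Disjoint (S 3) (S 5) := by
    rw [hS3, hS5, Set.disjoint_left]
    rintro x ⟨hx1, hx1'⟩ ⟨y, hy, hxy⟩
    obtain ⟨hb1, hb2⟩ := b1 x hx1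
    obtain ⟨hy0, hy1⟩ := hFmem y hy
    simp only [e2] at hxy
    have hyl : y ≤ l := by nlinarith
    obtain ⟨z, hz, hzy⟩ := hlow y hy hyl
    apply hx1'
    rw [hid1]
    exact ⟨z, hz, by show f 2 (f 0 z) = x; rw [hzy]; simp only [e2]; exact hxy⟩
  have d45 : Disjoint (S 4) (S 5) := by
    rw [hS4, hS5, Set.disjoint_left]
    rintro x ⟨hx1, hx1'⟩ ⟨y, hy, hxy⟩
    obtain ⟨hb1, hb2⟩ := b3 x hx1
    obtain ⟨hy0, hy1⟩ := hFmem y hy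
    simp only [e2] at hxy
    have hyl : 1 - l ≤ y := by nlinarith
    obtain ⟨z, hz, hzy⟩ := hhigh y hy hyl
    apply hx1'
    rw [hid2]
    exact ⟨z, hz, by show f 2 (f 5 z) = x; rw [hzy]; simp only [e2]; exact hxy⟩
  refine ⟨hid1, hid2, ?_, ?_⟩
  · -- pairwise disjoint
    intro i _ j _ hij
    simp only [Function.onFun]
    have key : ∀ x, x ∈ S 3 → 2 * l ≤ x ∧ x ≤ 3 * l := by
      intro x hx; rw [hS3] at hx; exact b1 x hx.1
    have key4 : ∀ x, x ∈ S 4 → 4 * l - 2 * l ^ 2 ≤ x ∧ x ≤ 5 * l - 2 * l ^ 2 := by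
      intro x hx; rw [hS4] at hx; exact b3 x hx.1
    have key0 : ∀ x, x ∈ S 0 → 0 ≤ x ∧ x ≤ l := by
      intro x hx; rw [hS0] at hx; exact b0 x hx
    have key1 : ∀ x, x ∈ S 1 → 5 * l ≤ x ∧ x ≤ 6 * l := by
      intro x hx; rw [hS1] at hx; exact b4 x hx
    have key2 : ∀ x, x ∈ S 2 → 1 - l ≤ x ∧ x ≤ 1 := by
      intro x hx; rw [hS2] at hx; exact b5 x hx
    have key5 : ∀ x, x ∈ S 5 → 3 * l - l ^ 2 ≤ x ∧ x ≤ 4 * l - l ^ 2 := by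
      intro x hx; rw [hS5] at hx; exact b2 x hx
    fin_cases i <;> fin_cases j <;>
      first
      | exact absurd rfl hij
      | exact d35
      | exact d35.symm
      | exact d45
      | exact d45.symm
      | (rw [Set.disjoint_left]
         intro x hx1 hx2
         first
           | have a1 := key0 x hx1 | have a1 := key1 x hx1
           | have a1 := key2 x hx1 | have a1 := key x hx1
           | have a1 := key4 x hx1 | have a1 := key5 x hx1
         first
           | have a2 := key0 x hx2 | have a2 := key1 x hx2
           | have a2 := key2 x hx2 | have a2 := key x hx2
           | have a2 := key4 x hx2 | have a2 := key5 x hx2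
         nlinarith [a1.1, a1.2, a2.1, a2.2])
  · -- union
    have himg : ∀ i : Fin 6, f i '' F ⊆ F := by
      intro i x hx
      rw [hFeq]
      exact Set.mem_iUnion.2 ⟨i, hx⟩
    apply Set.Subset.antisymm
    · apply Set.iUnion_subset
      intro i
      fin_cases i
      · exact hS0 ▸ himg 0
      · exact hS1 ▸ himg 4
      · exact hS2 ▸ himg 5
      · exact hS3 ▸ Set.diff_subset.trans (himg 1)
      · exact hS4 ▸ Set.diff_subset.trans (himg 3)
      · exact hS5 ▸ himg 2
    · intro x hx
      rw [hFeq] at hx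
      obtain ⟨i, hx⟩ := Set.mem_iUnion.1 hx
      have comp_sub : ∀ g : ℝ → ℝ, (f 2 ∘ g) '' F ⊆ f 2 '' (g '' F) := by
        intro g; rw [Set.image_comp]
      have h2F : ∀ g : ℝ → ℝ, g '' F ⊆ F → (f 2 ∘ g) '' F ⊆ f 2 '' F := by
        intro g hg
        refine (comp_sub g).trans (Set.image_mono hg)
      fin_cases i
      · exact Set.mem_iUnion.2 ⟨0, by rw [hS0]; exact hx⟩
      · by_cases h : x ∈ (f 1 ∘ f 5) '' F
        · refine Set.mem_iUnion.2 ⟨5, ?_⟩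
          rw [hS5]
          rw [hid1] at h
          exact h2F (f 0) (himg 0) h
        · exact Set.mem_iUnion.2 ⟨3, by rw [hS3]; exact ⟨hx, h⟩⟩
      · exact Set.mem_iUnion.2 ⟨5, by rw [hS5]; exact hx⟩
      · by_cases h : x ∈ (f 3 ∘ f 0) '' F
        · refine Set.mem_iUnion.2 ⟨5, ?_⟩
          rw [hS5]
          rw [hid2] at h
          exact h2F (f 5) (himg 5) h
        · exact Set.mem_iUnion.2 ⟨4, by rw [hS4]; exact ⟨hx, h⟩⟩
      · exact Set.mem_iUnion.2 ⟨1, by rw [hS1]; exact hx⟩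
      · exact Set.mem_iUnion.2 ⟨2, by rw [hS2]; exact hx⟩
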